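/- Let r_1, ..., r_M, r_{test} be real-valued random variables that are exchangeable. Let q̂ be the ⌈(M+1)(1-α)⌉-th smallest value among r_1, ..., r_M for α ∈ (0,1) with ⌈(M+1)(1-α)⌉ ≤ M. Then P(r_{test} ≤ q̂) ≥ 1 - α. -/

import Mathlib

open MeasureTheory Finset
open scoped ENNReal

/-- A finite sequence of random variables is exchangeable if its joint law is
invariant under every permutation of the indices. -/
def Exchangeable {Ω : Type*} [MeasurableSpace Ω] {E : Type*} [MeasurableSpace E]
    (μ : Measure Ω) {n : ℕ} (X : Fin n → Ω → E) : Prop :=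
  ∀ σ : Equiv.Perm (Fin n),
    μ.map (fun ω => fun i => X (σ i) ω) = μ.map (fun ω => fun i => X i ω)

/-- The `k`-th smallest value among `f 0, …, f (M-1)` (order statistic, `k ≥ 1`). -/
noncomputable def orderStat {M : ℕ} (f : Fin M → ℝ) (k : ℕ) : ℝ :=
  sInf {t : ℝ | k ≤ Set.ncard {i : Fin M | f i ≤ t}}

/-- Split conformal prediction coverage guarantee: if `r 0, …, r (M-1), rtest` are
exchangeable and `q̂` is the `⌈(M+1)(1-α)⌉`-th smallest of `r 0, …, r (M-1)`, with
`⌈(M+1)(1-α)⌉ ≤ M`, then `P(rtest ≤ q̂) ≥ 1 - α`. -/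
lemma ncard_setOf_eq' {n : ℕ} (p : Fin n → Prop) [DecidablePred p] :
    Set.ncard {i | p i} = (Finset.univ.filter p).card := by
  simp [Set.ncard_eq_toFinset_card', Set.toFinset_setOf]

lemma le_orderStat {M k : ℕ} (hk1 : 1 ≤ k) (hkM : k ≤ M) (f : Fin M → ℝ) (y : ℝ)
    (h : Set.ncard {i | f i < y} < k) : y ≤ orderStat f k := by
  have hM : 0 < M := hk1.trans hkM
  have hne : (Finset.univ : Finset (Fin M)).Nonempty := by
    refine ⟨⟨0, hM⟩, Finset.mem_univ _⟩
  apply le_csInf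
  · refine ⟨Finset.univ.sup' hne f, ?_⟩
    have huniv : {i : Fin M | f i ≤ Finset.univ.sup' hne f} = Set.univ := by
      ext i; simpa using ⟨i, le_rfl⟩
    rw [Set.mem_setOf_eq, huniv, Set.ncard_univ]
    simpa using hkM
  · intro t ht
    by_contra hlt
    push_neg at hlt
    have hsub : {i : Fin M | f i ≤ t} ⊆ {i | f i < y} := fun i hi =>
      lt_of_le_of_lt hi hlt
    have h2 := Set.ncard_le_ncard hsub (Set.toFinite _)
    rw [Set.mem_setOf_eq] at ht
    omega

lemma key_count {n k : ℕ} (hk : k ≤ n) (x : Fin n → ℝ) :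
    k ≤ (Finset.univ.filter fun j => (Finset.univ.filter fun i => x i < x j).card < k).card := by
  classical
  set T := Finset.univ.filter fun j => (Finset.univ.filter fun i => x i < x j).card < k with hT
  by_cases hc : Tᶜ.Nonempty
  · obtain ⟨j0, hj0, hmin⟩ := Tᶜ.exists_min_image x hc
    have hj0' : k ≤ (Finset.univ.filter fun i => x i < x j0).card := by
      have := Finset.mem_compl.mp hj0
      simp only [hT, Finset.mem_filter, Finset.mem_univ, true_and, not_lt] at this
      exact this
    refine hj0'.trans (Finset.card_le_card ?_)
    intro i hi
    simp only [Finset.mem_filter, Finset.mem_univ, true_and] at hi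
    by_contra hiT
    exact absurd hi (not_lt.mpr (hmin i (Finset.mem_compl.mpr hiT)))
  · rw [Finset.not_nonempty_iff_eq_empty, Finset.compl_eq_empty_iff] at hc
    rw [hc, Finset.card_univ, Fintype.card_fin]
    exact hk

lemma measurable_B {n k : ℕ} (j : Fin n) :
    MeasurableSet {g : Fin n → ℝ | (Finset.univ.filter fun i => g i < g j).card < k} := by
  classical
  have hset : {g : Fin n → ℝ | (Finset.univ.filter fun i => g i < g j).card < k}
      = ⋃ (s : Finset (Fin n)) (_ : s.card < k),
          ⋂ i, {g : Fin n → ℝ | i ∈ s ↔ g i < g j} := by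
    ext g
    simp only [Set.mem_setOf_eq, Set.mem_iUnion, Set.mem_iInter]
    constructor
    · intro h
      exact ⟨Finset.univ.filter fun i => g i < g j, h, fun i => by simp⟩
    · rintro ⟨s, hs, hmem⟩
      have hfe : (Finset.univ.filter fun i => g i < g j) = s := by
        ext i; simp [hmem i]
      rwa [hfe]
  rw [hset]
  refine MeasurableSet.iUnion fun s => MeasurableSet.iUnion fun _ =>
    MeasurableSet.iInter fun i => ?_
  by_cases hi : i ∈ s
  · have : {g : Fin n → ℝ | i ∈ s ↔ g i < g j} = {g | g i < g j} := by
      ext g; simp [hi]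
    rw [this]
    exact measurableSet_lt (measurable_pi_apply i) (measurable_pi_apply j)
  · have : {g : Fin n → ℝ | i ∈ s ↔ g i < g j} = {g | g j ≤ g i} := by
      ext g; simp [hi]
    rw [this]
    exact measurableSet_le (measurable_pi_apply j) (measurable_pi_apply i)

lemma card_filter_perm {n : ℕ} (σ : Equiv.Perm (Fin n)) (p : Fin n → Prop) [DecidablePred p] :
    (Finset.univ.filter fun i => p (σ i)).card = (Finset.univ.filter p).card := by
  apply Finset.card_equiv σ
  intro i
  simp

theorem split_conformal_coverage
    {Ω : Type*} [MeasurableSpace Ω] (μ : Measure Ω) [IsProbabilityMeasure μ]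
    {M : ℕ} (r : Fin M → Ω → ℝ) (rtest : Ω → ℝ)
    (hr : ∀ i, Measurable (r i)) (hrt : Measurable rtest)
    (hexch : Exchangeable μ (Fin.snoc r rtest : Fin (M + 1) → Ω → ℝ))
    (α : ℝ) (hα : α ∈ Set.Ioo (0 : ℝ) 1)
    (hk : ⌈((M : ℝ) + 1) * (1 - α)⌉₊ ≤ M) :
    ENNReal.ofReal (1 - α) ≤
      μ {ω | rtest ω ≤ orderStat (fun i => r i ω) ⌈((M : ℝ) + 1) * (1 - α)⌉₊} := by
  classical
  obtain ⟨hα0, hα1⟩ := hα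
  set k := ⌈((M : ℝ) + 1) * (1 - α)⌉₊ with hkdef
  have hk1 : 1 ≤ k := by
    have h1a : (0 : ℝ) < 1 - α := by linarith
    have : (0 : ℝ) < ((M : ℝ) + 1) * (1 - α) := by positivity
    exact Nat.ceil_pos.mpr this
  set X : Fin (M + 1) → Ω → ℝ := Fin.snoc r rtest with hX
  have hXm : ∀ i, Measurable (X i) := by
    intro i
    induction i using Fin.lastCases with
    | last => simpa [hX] using hrt
    | cast i => simpa [hX] using hr i
  set Φ : Ω → Fin (M + 1) → ℝ := fun ω i => X i ω with hΦ
  have hΦm : Measurable Φ := measurable_pi_lambda _ hXm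
  set A : Fin (M + 1) → Set Ω :=
    fun j => {ω | (Finset.univ.filter fun i => X i ω < X j ω).card < k} with hA
  have hApre : ∀ j, A j =
      Φ ⁻¹' {g : Fin (M + 1) → ℝ | (Finset.univ.filter fun i => g i < g j).card < k} :=
    fun j => rfl
  have hAm : ∀ j, MeasurableSet (A j) := by
    intro j
    rw [hApre j]
    exact hΦm (measurable_B j)
  -- all A j have the same measure
  have hAeq : ∀ j, μ (A j) = μ (A (Fin.last M)) := by
    intro j
    set σ := Equiv.swap j (Fin.last M) with hσ
    have hσm : Measurable (fun ω => fun i => X (σ i) ω) :=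
      measurable_pi_lambda _ fun i => hXm (σ i)
    have h1 := hexch σ
    have h2 : μ.map (fun ω => fun i => X (σ i) ω)
          {g : Fin (M + 1) → ℝ | (Finset.univ.filter fun i => g i < g (Fin.last M)).card < k}
        = μ.map (fun ω => fun i => X i ω)
          {g : Fin (M + 1) → ℝ | (Finset.univ.filter fun i => g i < g (Fin.last M)).card < k} := by
      rw [h1]
    rw [Measure.map_apply hσm (measurable_B _), Measure.map_apply hΦm (measurable_B _)] at h2
    have hpre : (fun ω => fun i => X (σ i) ω) ⁻¹'
        {g : Fin (M + 1) → ℝ | (Finset.univ.filter fun i => g i < g (Fin.last M)).card < k}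
        = A j := by
      ext ω
      simp only [Set.mem_preimage, Set.mem_setOf_eq, hA]
      have hσlast : σ (Fin.last M) = j := Equiv.swap_apply_right j (Fin.last M)
      simp only [hσlast]
      rw [card_filter_perm σ (fun i => X i ω < X j ω)]
    rw [hpre] at h2
    exact h2
  -- sum bound
  have hpoint : ∀ ω, (k : ℝ≥0∞) ≤ ∑ j, (A j).indicator (1 : Ω → ℝ≥0∞) ω := by
    intro ω
    have hcount := @key_count (M + 1) k (Nat.le_succ_of_le hk) (fun i => X i ω)
    have hsum : ∑ j, (A j).indicator (1 : Ω → ℝ≥0∞) ω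
        = ((Finset.univ.filter fun j => ω ∈ A j).card : ℝ≥0∞) := by
      simp [Set.indicator_apply, Finset.sum_boole]
      simp [Finset.card_filter]
    rw [hsum]
    have hfe : (Finset.univ.filter fun j => ω ∈ A j)
        = (Finset.univ.filter fun j =>
            (Finset.univ.filter fun i => X i ω < X j ω).card < k) := by
      apply Finset.filter_congr
      intro j _
      simp [hA]
    rw [hfe]
    exact_mod_cast hcount
  have hsum : (k : ℝ≥0∞) ≤ (M + 1) * μ (A (Fin.last M)) := by
    have c1 : (k : ℝ≥0∞) = ∫⁻ _, (k : ℝ≥0∞) ∂μ := by simp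
    rw [c1]
    calc ∫⁻ _, (k : ℝ≥0∞) ∂μ ≤ ∫⁻ ω, ∑ j, (A j).indicator (1 : Ω → ℝ≥0∞) ω ∂μ :=
          lintegral_mono hpoint
      _ = ∑ j, ∫⁻ ω, (A j).indicator (1 : Ω → ℝ≥0∞) ω ∂μ :=
          lintegral_finset_sum _ fun j _ => measurable_one.indicator (hAm j)
      _ = ∑ j, μ (A j) := by
          refine Finset.sum_congr rfl fun j _ => ?_
          rw [lintegral_indicator_one (hAm j)]
      _ = ∑ _j : Fin (M + 1), μ (A (Fin.last M)) :=
          Finset.sum_congr rfl fun j _ => hAeq j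
      _ = (M + 1) * μ (A (Fin.last M)) := by
          simp [Finset.sum_const, mul_comm]
  -- inclusion of events
  have hincl : A (Fin.last M) ⊆ {ω | rtest ω ≤ orderStat (fun i => r i ω) k} := by
    intro ω hω
    simp only [hA, Set.mem_setOf_eq] at hω
    refine le_orderStat hk1 hk _ _ ?_
    have hle : Set.ncard {i : Fin M | r i ω < rtest ω}
        ≤ (Finset.univ.filter fun i => X i ω < X (Fin.last M) ω).card := by
      rw [ncard_setOf_eq']
      apply Finset.card_le_card_of_injOn (fun i => Fin.castSucc i)
      · intro i hi
        simp only [Finset.mem_filter, Finset.mem_univ, true_and] at hi ⊢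
        simpa [hX, Fin.snoc_castSucc, Fin.snoc_last] using hi
      · intro a _ b _ h
        exact Fin.castSucc_injective M h
    omega
  -- final arithmetic
  have hMne : ((M : ℝ≥0∞) + 1) ≠ 0 := by simp
  have hMtop : ((M : ℝ≥0∞) + 1) ≠ ⊤ := by simp
  have harith : ENNReal.ofReal (1 - α) ≤ μ (A (Fin.last M)) := by
    rw [← ENNReal.mul_le_mul_iff_left hMne hMtop]
    calc ENNReal.ofReal (1 - α) * ((M : ℝ≥0∞) + 1)
        = ENNReal.ofReal ((1 - α) * ((M : ℝ) + 1)) := by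
          rw [ENNReal.ofReal_mul (by linarith)]
          congr 1
          rw [ENNReal.ofReal_add (by positivity) zero_le_one]
          simp
      _ ≤ (k : ℝ≥0∞) := by
          rw [show ((k : ℝ≥0∞)) = ENNReal.ofReal (k : ℝ) by simp]
          apply ENNReal.ofReal_le_ofReal
          rw [mul_comm]
          exact Nat.le_ceil _
      _ ≤ (M + 1) * μ (A (Fin.last M)) := hsum
      _ = μ (A (Fin.last M)) * ((M : ℝ≥0∞) + 1) := by ring
  exact harith.trans (measure_mono hincl)
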